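/- arXiv:1208.0709 — 2 statements merged into one kernel-verified Lean document; each statement's English description precedes it below -/
import Mathlib

section
/- Let H be a separable complex Hilbert space and R₀ > 0. Let v, w : (R₀,∞) → H be twice continuously differentiable functions such that v, v'', w, w'' all belong to L²H and such that v and w vanish identically on (R₀, R₀+δ) for some δ > 0. Then v', w' belong to L²H, the integrands below are integrable, and ∫_{R₀}^∞ ⟨v''(r), w(r)⟩_H dr = − ∫_{R₀}^∞ ⟨v'(r), w'(r)⟩_H dr. -/
open MeasureTheory Set Real Filter Topology

section Helpers

variable {H : Type*} [NormedAddCommGroup H] [InnerProductSpace ℂ H] [CompleteSpace H]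

omit [CompleteSpace H] in
lemma deriv_zero_of_vanish {R₀ c : ℝ} {v v' : ℝ → H}
    (hv1 : ∀ r ∈ Set.Ioi R₀, HasDerivAt v (v' r) r)
    (hz : ∀ r ∈ Set.Ioo R₀ c, v r = 0) :
    ∀ r ∈ Set.Ioo R₀ c, v' r = 0 := by
  intro r hr
  have h0 : HasDerivAt v (0 : H) r := by
    apply (hasDerivAt_const r (0 : H)).congr_of_eventuallyEq
    filter_upwards [Ioo_mem_nhds hr.1 hr.2] with x hx
    exact hz x hx
  exact (hv1 r (hr.1)).unique h0

omit [CompleteSpace H] in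
lemma inner_int {f g : ℝ → H} {s : Set ℝ} (hs : MeasurableSet s)
    (hf : ContinuousOn f s) (hg : ContinuousOn g s)
    (hf2 : IntegrableOn (fun r => ‖f r‖ ^ 2) s)
    (hg2 : IntegrableOn (fun r => ‖g r‖ ^ 2) s) :
    IntegrableOn (fun r => (inner ℂ (f r) (g r) : ℂ)) s := by
  have hm : AEStronglyMeasurable (fun r => (inner ℂ (f r) (g r) : ℂ)) (volume.restrict s) :=
    (hf.aestronglyMeasurable hs).inner (hg.aestronglyMeasurable hs)
  refine Integrable.mono' ((hf2.add hg2).div_const 2) hm ?_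
  refine Eventually.of_forall fun r => ?_
  calc ‖(inner ℂ (f r) (g r) : ℂ)‖ ≤ ‖f r‖ * ‖g r‖ := norm_inner_le_norm _ _
    _ ≤ (‖f r‖ ^ 2 + ‖g r‖ ^ 2) / 2 := by nlinarith [sq_nonneg (‖f r‖ - ‖g r‖)]

omit [CompleteSpace H] in
lemma hasDerivAt_normSq {f f' : ℝ → H} {x : ℝ} (hf : HasDerivAt f (f' x) x) :
    HasDerivAt (fun t => ‖f t‖ ^ 2) (2 * Complex.re (inner ℂ (f' x) (f x) : ℂ)) x := by
  have h1 : HasDerivAt (fun t => (inner ℂ (f t) (f t) : ℂ))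
      ((inner ℂ (f x) (f' x) : ℂ) + (inner ℂ (f' x) (f x) : ℂ)) x := hf.inner ℂ hf
  have h3 : HasDerivAt (fun t => Complex.re (inner ℂ (f t) (f t) : ℂ))
      (Complex.re ((inner ℂ (f x) (f' x) : ℂ) + (inner ℂ (f' x) (f x) : ℂ))) x :=
    by have := (Complex.reCLM.hasFDerivAt (x := ((inner ℂ (f x) (f x)) : ℂ))).comp_hasDerivAt x h1; exact this
  have e1 : (fun t => Complex.re (inner ℂ (f t) (f t) : ℂ)) = fun t => ‖f t‖ ^ 2 := by
    funext t; exact inner_self_eq_norm_sq (𝕜 := ℂ) (f t)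
  have e2 : Complex.re ((inner ℂ (f x) (f' x) : ℂ) + (inner ℂ (f' x) (f x) : ℂ))
      = 2 * Complex.re (inner ℂ (f' x) (f x) : ℂ) := by
    rw [Complex.add_re, ← inner_conj_symm (f' x) (f x), Complex.conj_re]
    ring
  rw [← e1]
  exact e2 ▸ h3

lemma tendsto_zero_aux {R₀ a : ℝ} (ha : R₀ < a) {h h' : ℝ → ℝ}
    (hd : ∀ r ∈ Set.Ioi R₀, HasDerivAt h (h' r) r)
    (hc' : ContinuousOn h' (Set.Ioi R₀))
    (hint' : IntegrableOn h' (Set.Ioi a))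
    (hint : IntegrableOn h (Set.Ioi R₀))
    (hnn : ∀ r ∈ Set.Ioi R₀, 0 ≤ h r) :
    Tendsto h atTop (𝓝 0) := by
  have key : ∀ b, a ≤ b → h b = h a + ∫ x in a..b, h' x := by
    intro b hb
    have heq : ∫ x in a..b, h' x = h b - h a := by
      apply intervalIntegral.integral_eq_sub_of_hasDerivAt
      · intro x hx
        rw [uIcc_of_le hb] at hx
        exact hd x (lt_of_lt_of_le ha hx.1)
      · apply (hc'.mono ?_).intervalIntegrable
        rw [uIcc_of_le hb]
        exact fun x hx => lt_of_lt_of_le ha hx.1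
    rw [heq]; ring
  have h1 : Tendsto (fun b => ∫ x in a..b, h' x) atTop (𝓝 (∫ x in Set.Ioi a, h' x)) :=
    intervalIntegral_tendsto_integral_Ioi a hint' tendsto_id
  set L := h a + ∫ x in Set.Ioi a, h' x with hLdef
  have h2 : Tendsto h atTop (𝓝 L) := by
    apply Tendsto.congr' ?_ (tendsto_const_nhds.add h1)
    filter_upwards [eventually_ge_atTop a] with b hb
    exact (key b hb).symm
  have hLnn : 0 ≤ L := by
    refine ge_of_tendsto h2 ?_
    filter_upwards [eventually_gt_atTop R₀] with b hb
    exact hnn b hb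
  rcases eq_or_lt_of_le hLnn with hL0 | hLpos
  · rwa [← hL0] at h2
  · exfalso
    have hev : ∀ᶠ b in atTop, L / 2 < h b := h2.eventually (eventually_gt_nhds (half_lt_self hLpos))
    obtain ⟨b₀, hb₀⟩ := hev.exists_forall_of_atTop
    set b₁ := max b₀ (R₀ + 1) with hb₁
    have hIoi : Set.Ioi b₁ ⊆ Set.Ioi R₀ :=
      Ioi_subset_Ioi (le_trans (by linarith) (le_max_right b₀ (R₀ + 1)))
    have hconst : IntegrableOn (fun _ : ℝ => L / 2) (Set.Ioi b₁) := by
      refine Integrable.mono' (hint.mono_set hIoi) aestronglyMeasurable_const ?_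
      filter_upwards [ae_restrict_mem measurableSet_Ioi] with x hx
      rw [Real.norm_eq_abs, abs_of_pos (half_pos hLpos)]
      exact (hb₀ x (le_trans (le_max_left _ _) (le_of_lt hx))).le
    rw [integrableOn_const_iff] at hconst
    rcases hconst with hc | hc
    · exact absurd (enorm_eq_zero.mp hc) (ne_of_gt (half_pos hLpos))
    · rw [Real.volume_Ioi] at hc; exact absurd hc (by simp)

omit [CompleteSpace H] in
lemma derivL2 {R₀ a c : ℝ} (ha : R₀ < a) (hac : a < c) {v v' v'' : ℝ → H}
    (hv1 : ∀ r ∈ Set.Ioi R₀, HasDerivAt v (v' r) r)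
    (hv2 : ∀ r ∈ Set.Ioi R₀, HasDerivAt v' (v'' r) r)
    (hv2c : ContinuousOn v'' (Set.Ioi R₀))
    (hvL2 : IntegrableOn (fun r => ‖v r‖ ^ 2) (Set.Ioi R₀))
    (hv''L2 : IntegrableOn (fun r => ‖v'' r‖ ^ 2) (Set.Ioi R₀))
    (hz : ∀ r ∈ Set.Ioo R₀ c, v r = 0)
    (hz' : ∀ r ∈ Set.Ioo R₀ c, v' r = 0) :
    IntegrableOn (fun r => ‖v' r‖ ^ 2) (Set.Ioi R₀) := by
  have hvc : ContinuousOn v (Set.Ioi R₀) :=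
    fun r hr => (hv1 r hr).continuousAt.continuousWithinAt
  have hv'c : ContinuousOn v' (Set.Ioi R₀) :=
    fun r hr => (hv2 r hr).continuousAt.continuousWithinAt
  have haIoo : a ∈ Set.Ioo R₀ c := ⟨ha, hac⟩
  have hva : v a = 0 := hz a haIoo
  have hv'a : v' a = 0 := hz' a haIoo
  -- dominating constant
  set Cfun : ℝ → ℝ := fun x => (‖v'' x‖ ^ 2 + ‖v x‖ ^ 2) / 2 with hCfun
  have hCint0 : IntegrableOn Cfun (Set.Ioi R₀) := (hv''L2.add hvL2).div_const 2
  have hCint : IntegrableOn Cfun (Set.Ioi a) := hCint0.mono_set (Ioi_subset_Ioi ha.le)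
  set C : ℝ := ∫ x in Set.Ioi a, Cfun x with hCdef
  have hCnn : 0 ≤ C := setIntegral_nonneg measurableSet_Ioi (fun x _ => by positivity)
  -- interval integrabilities
  have hIccsub : ∀ {p q : ℝ}, a ≤ p → Set.Icc p q ⊆ Set.Ioi R₀ :=
    fun {p q} hp x hx => lt_of_lt_of_le ha (le_trans hp hx.1)
  have hinnerC : ContinuousOn (fun x => (inner ℂ (v'' x) (v x) : ℂ)) (Set.Ioi R₀) :=
    hv2c.inner hvc
  have hinner'C : ContinuousOn (fun x => (inner ℂ (v' x) (v x) : ℂ)) (Set.Ioi R₀) :=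
    hv'c.inner hvc
  have hnormC : ContinuousOn (fun x => ‖v' x‖ ^ 2) (Set.Ioi R₀) := (hv'c.norm).pow 2
  -- bound on ∫ inner
  have bound : ∀ b, a ≤ b → ‖∫ x in a..b, (inner ℂ (v'' x) (v x) : ℂ)‖ ≤ C := by
    intro b hb
    have hsub : Set.uIcc a b ⊆ Set.Ioi R₀ := by rw [uIcc_of_le hb]; exact hIccsub le_rfl
    calc ‖∫ x in a..b, (inner ℂ (v'' x) (v x) : ℂ)‖
        ≤ ∫ x in a..b, ‖(inner ℂ (v'' x) (v x) : ℂ)‖ :=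
          intervalIntegral.norm_integral_le_integral_norm hb
      _ ≤ ∫ x in a..b, Cfun x := by
          apply intervalIntegral.integral_mono_on hb
          · exact ((hinnerC.mono hsub).norm).intervalIntegrable
          · exact (((hv2c.norm.pow 2).add (hvc.norm.pow 2)).div_const 2).mono hsub
              |>.intervalIntegrable
          · intro x hx
            calc ‖(inner ℂ (v'' x) (v x) : ℂ)‖ ≤ ‖v'' x‖ * ‖v x‖ := norm_inner_le_norm _ _
              _ ≤ Cfun x := by
                  simp only [hCfun]; nlinarith [sq_nonneg (‖v'' x‖ - ‖v x‖)]
      _ ≤ C := by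
          rw [intervalIntegral.integral_of_le hb]
          apply setIntegral_mono_set hCint
          · filter_upwards with x using (by positivity)
          · exact HasSubset.Subset.eventuallyLE Ioc_subset_Ioi_self
  -- FTC key identity
  have key : ∀ b, a ≤ b →
      ((∫ x in a..b, ‖v' x‖ ^ 2 : ℝ) : ℂ) + ∫ x in a..b, (inner ℂ (v'' x) (v x) : ℂ)
        = (inner ℂ (v' b) (v b) : ℂ) := by
    intro b hb
    have hsub : Set.uIcc a b ⊆ Set.Ioi R₀ := by rw [uIcc_of_le hb]; exact hIccsub le_rfl
    have hftc : ∫ x in a..b, (((‖v' x‖ ^ 2 : ℝ) : ℂ) + (inner ℂ (v'' x) (v x) : ℂ))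
        = (inner ℂ (v' b) (v b) : ℂ) - (inner ℂ (v' a) (v a) : ℂ) := by
      apply intervalIntegral.integral_eq_sub_of_hasDerivAt
      · intro x hx
        have hxI : x ∈ Set.Ioi R₀ := hsub hx
        have hd := (hv2 x hxI).inner ℂ (hv1 x hxI)
        have : (inner ℂ (v' x) (v' x) : ℂ) + (inner ℂ (v'' x) (v x) : ℂ)
            = ((‖v' x‖ ^ 2 : ℝ) : ℂ) + (inner ℂ (v'' x) (v x) : ℂ) := by
          rw [inner_self_eq_norm_sq_to_K]; norm_cast
        exact this ▸ hd
      · apply ContinuousOn.intervalIntegrable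
        apply ContinuousOn.add ?_ (hinnerC.mono hsub)
        exact Complex.continuous_ofReal.comp_continuousOn ((hnormC.mono hsub))
    rw [intervalIntegral.integral_add, intervalIntegral.integral_ofReal] at hftc
    · rw [hftc, hva, inner_zero_right, sub_zero]
    · apply ContinuousOn.intervalIntegrable
      exact Complex.continuous_ofReal.comp_continuousOn (hnormC.mono hsub)
    · exact (hinnerC.mono hsub).intervalIntegrable
  -- the main boundedness claim
  have main : ∀ b, (∫ x in a..b, ‖v' x‖ ^ 2) ≤ C + 1 := by
    by_contra hcon
    push_neg at hcon
    obtain ⟨b₁, hb₁⟩ := hcon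
    have hab₁ : a < b₁ := by
      by_contra hle
      push_neg at hle
      have : (∫ x in a..b₁, ‖v' x‖ ^ 2) ≤ 0 := by
        rw [intervalIntegral.integral_symm]
        simp only [neg_nonpos]
        exact intervalIntegral.integral_nonneg hle (fun x _ => by positivity)
      linarith
    -- for b ≥ b₁, re ⟨v' b, v b⟩ ≥ 1
    have hre : ∀ b, b₁ ≤ b → 1 ≤ Complex.re (inner ℂ (v' b) (v b) : ℂ) := by
      intro b hb
      have hab : a ≤ b := le_trans hab₁.le hb
      have hmono : (∫ x in a..b₁, ‖v' x‖ ^ 2) ≤ ∫ x in a..b, ‖v' x‖ ^ 2 := by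
        have hsplit : (∫ x in a..b₁, ‖v' x‖ ^ 2) + (∫ x in b₁..b, ‖v' x‖ ^ 2)
            = ∫ x in a..b, ‖v' x‖ ^ 2 := by
          apply intervalIntegral.integral_add_adjacent_intervals
          · exact ((hnormC.mono (by rw [uIcc_of_le hab₁.le]; exact hIccsub le_rfl))).intervalIntegrable
          · exact ((hnormC.mono (by rw [uIcc_of_le hb]; exact hIccsub (le_trans hab₁.le le_rfl)))).intervalIntegrable
        have h2 : 0 ≤ ∫ x in b₁..b, ‖v' x‖ ^ 2 :=
          intervalIntegral.integral_nonneg hb (fun x _ => by positivity)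
        linarith
      have hk := key b hab
      have hre1 : Complex.re (inner ℂ (v' b) (v b) : ℂ)
          = (∫ x in a..b, ‖v' x‖ ^ 2) + Complex.re (∫ x in a..b, (inner ℂ (v'' x) (v x) : ℂ)) := by
        rw [← hk, Complex.add_re, Complex.ofReal_re]
      have habs : |Complex.re (∫ x in a..b, (inner ℂ (v'' x) (v x) : ℂ))| ≤ C :=
        le_trans (Complex.abs_re_le_norm _) (bound b hab)
      rw [hre1]
      have := abs_le.mp habs
      linarith
    -- then ‖v b‖² grows linearly, contradiction with integrability
    have hgrow : ∀ b, b₁ ≤ b → 2 * (b - b₁) ≤ ‖v b‖ ^ 2 := by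
      intro b hb
      have hsub : Set.uIcc b₁ b ⊆ Set.Ioi R₀ := by
        rw [uIcc_of_le hb]; exact hIccsub hab₁.le
      have hftc : ∫ x in b₁..b, 2 * Complex.re (inner ℂ (v' x) (v x) : ℂ)
          = ‖v b‖ ^ 2 - ‖v b₁‖ ^ 2 := by
        apply intervalIntegral.integral_eq_sub_of_hasDerivAt
        · intro x hx
          exact hasDerivAt_normSq (hv1 x (hsub hx))
        · apply ContinuousOn.intervalIntegrable
          exact continuousOn_const.mul (Complex.continuous_re.comp_continuousOn (hinner'C.mono hsub))
      have hmono2 : ∫ x in b₁..b, (2:ℝ) ≤ ∫ x in b₁..b, 2 * Complex.re (inner ℂ (v' x) (v x) : ℂ) := by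
        apply intervalIntegral.integral_mono_on hb
        · exact intervalIntegrable_const
        · apply ContinuousOn.intervalIntegrable
          exact continuousOn_const.mul (Complex.continuous_re.comp_continuousOn (hinner'C.mono hsub))
        · intro x hx
          have := hre x hx.1
          linarith
      rw [intervalIntegral.integral_const, hftc, smul_eq_mul] at hmono2
      have hnn2 : 0 ≤ ‖v b₁‖ ^ 2 := by positivity
      linarith
    have h2const : IntegrableOn (fun _ : ℝ => (2:ℝ)) (Set.Ioi (b₁ + 1)) := by
      refine Integrable.mono' (hvL2.mono_set (Ioi_subset_Ioi (by linarith))) aestronglyMeasurable_const ?_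
      filter_upwards [ae_restrict_mem measurableSet_Ioi] with x hx
      have hx1 : b₁ + 1 < x := hx
      have := hgrow x (by linarith)
      rw [Real.norm_eq_abs, abs_of_nonneg (by norm_num : (0:ℝ) ≤ 2)]
      linarith
    rw [integrableOn_const_iff] at h2const
    rcases h2const with hcc | hcc
    · norm_num at hcc
    · rw [Real.volume_Ioi] at hcc; exact absurd hcc (by simp)
  -- boundedness gives integrability on Ioi a
  have hIoiA : IntegrableOn (fun r => ‖v' r‖ ^ 2) (Set.Ioi a) := by
    apply integrableOn_Ioi_of_intervalIntegral_norm_bounded (C + 1) a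
      (b := fun i : ℝ => i) (l := atTop) ?_ tendsto_id ?_
    · intro i
      apply IntegrableOn.mono_set ?_ Ioc_subset_Icc_self
      apply ContinuousOn.integrableOn_Icc
      exact hnormC.mono (fun x hx => lt_of_lt_of_le ha hx.1)
    · filter_upwards [eventually_ge_atTop a] with i hi
      have heq : ∫ x in a..i, ‖(‖v' x‖ ^ 2 : ℝ)‖ = ∫ x in a..i, ‖v' x‖ ^ 2 := by
        apply intervalIntegral.integral_congr
        intro x _
        show ‖(‖v' x‖ ^ 2 : ℝ)‖ = ‖v' x‖ ^ 2
        rw [Real.norm_eq_abs, abs_of_nonneg (by positivity)]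
      rw [heq]
      exact main i
  have hIocz : IntegrableOn (fun r => ‖v' r‖ ^ 2) (Set.Ioc R₀ a) := by
    refine (integrableOn_zero).congr_fun ?_ measurableSet_Ioc
    intro x hx
    simp only []
    rw [hz' x ⟨hx.1, lt_of_le_of_lt hx.2 hac⟩, norm_zero]
    norm_num
  rw [← Ioc_union_Ioi_eq_Ioi ha.le]
  exact hIocz.union hIoiA

end Helpers

theorem stmt_4 {H : Type*} [NormedAddCommGroup H] [InnerProductSpace ℂ H] [CompleteSpace H]
    [TopologicalSpace.SeparableSpace H]
    (R₀ : ℝ) (hR₀ : 0 < R₀) (v v' v'' w w' w'' : ℝ → H)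
    (hv1 : ∀ r ∈ Set.Ioi R₀, HasDerivAt v (v' r) r)
    (hv2 : ∀ r ∈ Set.Ioi R₀, HasDerivAt v' (v'' r) r)
    (hv2c : ContinuousOn v'' (Set.Ioi R₀))
    (hw1 : ∀ r ∈ Set.Ioi R₀, HasDerivAt w (w' r) r)
    (hw2 : ∀ r ∈ Set.Ioi R₀, HasDerivAt w' (w'' r) r)
    (hw2c : ContinuousOn w'' (Set.Ioi R₀))
    (hvL2 : IntegrableOn (fun r : ℝ => ‖v r‖ ^ 2) (Set.Ioi R₀))
    (hv''L2 : IntegrableOn (fun r : ℝ => ‖v'' r‖ ^ 2) (Set.Ioi R₀))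
    (hwL2 : IntegrableOn (fun r : ℝ => ‖w r‖ ^ 2) (Set.Ioi R₀))
    (hw''L2 : IntegrableOn (fun r : ℝ => ‖w'' r‖ ^ 2) (Set.Ioi R₀))
    (hvvan : ∃ δ > 0, ∀ r ∈ Set.Ioo R₀ (R₀ + δ), v r = 0)
    (hwvan : ∃ δ > 0, ∀ r ∈ Set.Ioo R₀ (R₀ + δ), w r = 0) :
    IntegrableOn (fun r : ℝ => ‖v' r‖ ^ 2) (Set.Ioi R₀) ∧
    IntegrableOn (fun r : ℝ => ‖w' r‖ ^ 2) (Set.Ioi R₀) ∧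
    IntegrableOn (fun r : ℝ => (inner ℂ (v'' r) (w r) : ℂ)) (Set.Ioi R₀) ∧
    IntegrableOn (fun r : ℝ => (inner ℂ (v' r) (w' r) : ℂ)) (Set.Ioi R₀) ∧
    ∫ r in Set.Ioi R₀, (inner ℂ (v'' r) (w r) : ℂ) =
      - ∫ r in Set.Ioi R₀, (inner ℂ (v' r) (w' r) : ℂ) := by
  obtain ⟨δv, hδv, hvz⟩ := hvvan
  obtain ⟨δw, hδw, hwz⟩ := hwvan
  set δ := min δv δw with hδdef
  have hδ : 0 < δ := lt_min hδv hδw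
  set c := R₀ + δ with hcdef
  set a := R₀ + δ / 2 with hadef
  have ha : R₀ < a := by simp [hadef]; linarith
  have hac : a < c := by simp [hadef, hcdef]; linarith
  have hvz' : ∀ r ∈ Set.Ioo R₀ c, v r = 0 := fun r hr =>
    hvz r ⟨hr.1, lt_of_lt_of_le hr.2 (by simp [hcdef]; exact min_le_left _ _)⟩
  have hwz' : ∀ r ∈ Set.Ioo R₀ c, w r = 0 := fun r hr =>
    hwz r ⟨hr.1, lt_of_lt_of_le hr.2 (by simp [hcdef]; exact min_le_right _ _)⟩
  have hv'z := deriv_zero_of_vanish hv1 hvz'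
  have hw'z := deriv_zero_of_vanish hw1 hwz'
  have hvc : ContinuousOn v (Set.Ioi R₀) :=
    fun r hr => (hv1 r hr).continuousAt.continuousWithinAt
  have hv'c : ContinuousOn v' (Set.Ioi R₀) :=
    fun r hr => (hv2 r hr).continuousAt.continuousWithinAt
  have hwc : ContinuousOn w (Set.Ioi R₀) :=
    fun r hr => (hw1 r hr).continuousAt.continuousWithinAt
  have hw'c : ContinuousOn w' (Set.Ioi R₀) :=
    fun r hr => (hw2 r hr).continuousAt.continuousWithinAt
  have hv'L2 : IntegrableOn (fun r : ℝ => ‖v' r‖ ^ 2) (Set.Ioi R₀) :=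
    derivL2 ha hac hv1 hv2 hv2c hvL2 hv''L2 hvz' hv'z
  have hw'L2 : IntegrableOn (fun r : ℝ => ‖w' r‖ ^ 2) (Set.Ioi R₀) :=
    derivL2 ha hac hw1 hw2 hw2c hwL2 hw''L2 hwz' hw'z
  have hint1 : IntegrableOn (fun r : ℝ => (inner ℂ (v'' r) (w r) : ℂ)) (Set.Ioi R₀) :=
    inner_int measurableSet_Ioi hv2c hwc hv''L2 hwL2
  have hint2 : IntegrableOn (fun r : ℝ => (inner ℂ (v' r) (w' r) : ℂ)) (Set.Ioi R₀) :=
    inner_int measurableSet_Ioi hv'c hw'c hv'L2 hw'L2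
  refine ⟨hv'L2, hw'L2, hint1, hint2, ?_⟩
  -- limits at infinity
  have hwlim : Tendsto (fun b => ‖w b‖ ^ 2) atTop (𝓝 0) := by
    apply tendsto_zero_aux ha (h' := fun t => 2 * Complex.re (inner ℂ (w' t) (w t) : ℂ))
    · exact fun r hr => hasDerivAt_normSq (hw1 r hr)
    · exact continuousOn_const.mul (Complex.continuous_re.comp_continuousOn (hw'c.inner hwc))
    · have hsum : IntegrableOn (fun r => ‖w' r‖ ^ 2 + ‖w r‖ ^ 2) (Set.Ioi R₀) := hw'L2.add hwL2
      refine Integrable.mono' (hsum.mono_set (Ioi_subset_Ioi ha.le))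
        (((continuousOn_const.mul (Complex.continuous_re.comp_continuousOn
          (hw'c.inner hwc))).mono (Ioi_subset_Ioi ha.le)).aestronglyMeasurable
          measurableSet_Ioi) ?_
      refine Eventually.of_forall fun x => ?_
      have h0 : |Complex.re (inner ℂ (w' x) (w x) : ℂ)| ≤ ‖(inner ℂ (w' x) (w x) : ℂ)‖ :=
        Complex.abs_re_le_norm _
      have h1 : |Complex.re (inner ℂ (w' x) (w x) : ℂ)| ≤ ‖w' x‖ * ‖w x‖ :=
        le_trans h0 (norm_inner_le_norm _ _)
      rw [Real.norm_eq_abs, abs_mul, abs_two]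
      have : (0:ℝ) ≤ |Complex.re (inner ℂ (w' x) (w x) : ℂ)| := abs_nonneg _
      nlinarith [sq_nonneg (‖w' x‖ - ‖w x‖)]
    · exact hwL2
    · exact fun r _ => by positivity
  have hv'lim : Tendsto (fun b => ‖v' b‖ ^ 2) atTop (𝓝 0) := by
    apply tendsto_zero_aux ha (h' := fun t => 2 * Complex.re (inner ℂ (v'' t) (v' t) : ℂ))
    · exact fun r hr => hasDerivAt_normSq (hv2 r hr)
    · exact continuousOn_const.mul (Complex.continuous_re.comp_continuousOn (hv2c.inner hv'c))
    · have hsum : IntegrableOn (fun r => ‖v'' r‖ ^ 2 + ‖v' r‖ ^ 2) (Set.Ioi R₀) := hv''L2.add hv'L2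
      refine Integrable.mono' (hsum.mono_set (Ioi_subset_Ioi ha.le))
        (((continuousOn_const.mul (Complex.continuous_re.comp_continuousOn
          (hv2c.inner hv'c))).mono (Ioi_subset_Ioi ha.le)).aestronglyMeasurable
          measurableSet_Ioi) ?_
      refine Eventually.of_forall fun x => ?_
      have h0 : |Complex.re (inner ℂ (v'' x) (v' x) : ℂ)| ≤ ‖(inner ℂ (v'' x) (v' x) : ℂ)‖ :=
        Complex.abs_re_le_norm _
      have h1 : |Complex.re (inner ℂ (v'' x) (v' x) : ℂ)| ≤ ‖v'' x‖ * ‖v' x‖ :=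
        le_trans h0 (norm_inner_le_norm _ _)
      rw [Real.norm_eq_abs, abs_mul, abs_two]
      have : (0:ℝ) ≤ |Complex.re (inner ℂ (v'' x) (v' x) : ℂ)| := abs_nonneg _
      nlinarith [sq_nonneg (‖v'' x‖ - ‖v' x‖)]
    · exact hv'L2
    · exact fun r _ => by positivity
  -- boundary term tends to zero
  have hbnd : Tendsto (fun b => (inner ℂ (v' b) (w b) : ℂ)) atTop (𝓝 0) := by
    have hs : Tendsto Real.sqrt (𝓝 0) (𝓝 0) := by
      simpa using Real.continuous_sqrt.tendsto 0
    have hg : Tendsto (fun b => Real.sqrt (‖v' b‖ ^ 2) * Real.sqrt (‖w b‖ ^ 2)) atTop (𝓝 0) := by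
      simpa using (hs.comp hv'lim).mul (hs.comp hwlim)
    refine squeeze_zero_norm (fun b => ?_) hg
    rw [Real.sqrt_sq (norm_nonneg _), Real.sqrt_sq (norm_nonneg _)]
    exact norm_inner_le_norm _ _
  -- FTC on [a, b]
  have hDcont : ContinuousOn
      (fun x => (inner ℂ (v' x) (w' x) : ℂ) + (inner ℂ (v'' x) (w x) : ℂ)) (Set.Ioi R₀) :=
    (hv'c.inner hw'c).add (hv2c.inner hwc)
  have key : ∀ b, a ≤ b →
      (∫ x in a..b, (inner ℂ (v' x) (w' x) : ℂ)) + (∫ x in a..b, (inner ℂ (v'' x) (w x) : ℂ))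
        = (inner ℂ (v' b) (w b) : ℂ) := by
    intro b hb
    have hsub : Set.uIcc a b ⊆ Set.Ioi R₀ := by
      rw [uIcc_of_le hb]
      exact fun x hx => lt_of_lt_of_le ha hx.1
    have hftc : ∫ x in a..b, ((inner ℂ (v' x) (w' x) : ℂ) + (inner ℂ (v'' x) (w x) : ℂ))
        = (inner ℂ (v' b) (w b) : ℂ) - (inner ℂ (v' a) (w a) : ℂ) := by
      apply intervalIntegral.integral_eq_sub_of_hasDerivAt
      · intro x hx
        exact (hv2 x (hsub hx)).inner ℂ (hw1 x (hsub hx))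
      · exact (hDcont.mono hsub).intervalIntegrable
    rw [intervalIntegral.integral_add ((hv'c.inner hw'c).mono hsub).intervalIntegrable
      ((hv2c.inner hwc).mono hsub).intervalIntegrable] at hftc
    rw [hftc, hwz' a ⟨ha, hac⟩, inner_zero_right, sub_zero]
  -- pass to the limit
  have t1 : Tendsto (fun b => ∫ x in a..b, (inner ℂ (v' x) (w' x) : ℂ)) atTop
      (𝓝 (∫ x in Set.Ioi a, (inner ℂ (v' x) (w' x) : ℂ))) :=
    intervalIntegral_tendsto_integral_Ioi a (hint2.mono_set (Ioi_subset_Ioi ha.le)) tendsto_id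
  have t2 : Tendsto (fun b => ∫ x in a..b, (inner ℂ (v'' x) (w x) : ℂ)) atTop
      (𝓝 (∫ x in Set.Ioi a, (inner ℂ (v'' x) (w x) : ℂ))) :=
    intervalIntegral_tendsto_integral_Ioi a (hint1.mono_set (Ioi_subset_Ioi ha.le)) tendsto_id
  have sum0 : (∫ x in Set.Ioi a, (inner ℂ (v' x) (w' x) : ℂ))
      + (∫ x in Set.Ioi a, (inner ℂ (v'' x) (w x) : ℂ)) = 0 := by
    refine tendsto_nhds_unique (t1.add t2) ?_
    apply Tendsto.congr' ?_ hbnd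
    filter_upwards [eventually_ge_atTop a] with b hb
    exact (key b hb).symm
  -- transfer integrals from Ioi a to Ioi R₀
  have split : ∀ f : ℝ → ℂ, IntegrableOn f (Set.Ioi R₀) → (∀ x ∈ Set.Ioc R₀ a, f x = 0) →
      ∫ x in Set.Ioi R₀, f x = ∫ x in Set.Ioi a, f x := by
    intro f hf h0
    rw [← Ioc_union_Ioi_eq_Ioi ha.le,
      setIntegral_union (Ioc_disjoint_Ioi le_rfl) measurableSet_Ioi
        (hf.mono_set (fun x hx => hx.1)) (hf.mono_set (Ioi_subset_Ioi ha.le))]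
    rw [setIntegral_congr_fun measurableSet_Ioc (g := fun _ => (0:ℂ)) h0, integral_zero, zero_add]
  have e1 : ∫ r in Set.Ioi R₀, (inner ℂ (v'' r) (w r) : ℂ)
      = ∫ x in Set.Ioi a, (inner ℂ (v'' x) (w x) : ℂ) := by
    apply split _ hint1
    intro x hx
    rw [hwz' x ⟨hx.1, lt_of_le_of_lt hx.2 hac⟩, inner_zero_right]
  have e2 : ∫ r in Set.Ioi R₀, (inner ℂ (v' r) (w' r) : ℂ)
      = ∫ x in Set.Ioi a, (inner ℂ (v' x) (w' x) : ℂ) := by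
    apply split _ hint2
    intro x hx
    rw [hw'z x ⟨hx.1, lt_of_le_of_lt hx.2 hac⟩, inner_zero_right]
  rw [e1, e2]
  linear_combination sum0
end

section
/- Integrated form of the eigenvalue equation: in the operator setting described in the context, assume τ₀ > 1, τ₁ > 2 and τ₂ > 2, let u be a solution of Pu = 0 as described in the context, and assume moreover that ∫_r^∞ e^{−2t} ‖Q u(t)‖_H dt < ∞ for every r > R₀. Then for every r > R₀ the functions t ↦ e^{−2t}Q(t)u(t), t ↦ V₁(t)u'(t) and t ↦ V₂(t)u(t) are Bochner integrable on (r,∞) and −u'(r) = ∫_r^∞ e^{−2t} Q(t) u(t) dt + ∫_r^∞ V₁(t) u'(t) dt + ∫_r^∞ V₂(t) u(t) dt. -/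
open MeasureTheory Set Real Filter

/-- The abstract operator setting of Bouclet's paper: a dense subspace `D` of a Hilbert
space `H`, a symmetric coercive operator `A : D → D` (playing the role of `Q^{1/2}`, with
`Q := A ∘ A = A^2`), families of operators `Q(r), V₁(r), V₂(r)` (with derivatives in `r`
denoted `Q'(r), Q''(r), V₁'(r)`) defined for `r > R₀`, satisfying the smoothness
assumptions and the decay assumptions (A0), (A1), (A2) with exponents `τ₀, τ₁, τ₂ > 0`. -/
structure OpSetting (H : Type*) [NormedAddCommGroup H] [InnerProductSpace ℂ H]
    [CompleteSpace H] (R₀ : ℝ) where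
  /-- the dense subspace `D ⊆ H` -/
  D : Submodule ℂ H
  denseD : Dense (D : Set H)
  /-- `A` plays the role of `Q^{1/2}` -/
  A : D →ₗ[ℂ] D
  A_symm : ∀ φ ψ : D, (inner ℂ ((A φ : H)) ((ψ : H)) : ℂ) = inner ℂ ((φ : H)) ((A ψ : H))
  A_coercive : ∀ φ : D, ‖(φ : H)‖ ^ 2 ≤ (inner ℂ ((A φ : H)) ((φ : H)) : ℂ).re
  /-- the family `Q(r)` -/
  Qr : ℝ → D →ₗ[ℂ] D
  /-- the derivative `Q'(r)` -/
  Qr' : ℝ → D →ₗ[ℂ] D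
  /-- the second derivative `Q''(r)` -/
  Qr'' : ℝ → D →ₗ[ℂ] D
  /-- the family `V₁(r)` -/
  V₁ : ℝ → D →ₗ[ℂ] D
  /-- the derivative `V₁'(r)` -/
  V₁' : ℝ → D →ₗ[ℂ] D
  /-- the family `V₂(r)` -/
  V₂ : ℝ → D →ₗ[ℂ] D
  τ₀ : ℝ
  τ₁ : ℝ
  τ₂ : ℝ
  τ₀_pos : 0 < τ₀
  τ₁_pos : 0 < τ₁
  τ₂_pos : 0 < τ₂
  -- smoothness in `r` of the operator families, tested against all powers of `A`
  Qr_hasDeriv : ∀ (m : ℕ) (φ : D), ∀ r ∈ Set.Ioi R₀,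
    HasDerivAt (fun t : ℝ => (((A ^ m) (Qr t φ)) : H)) (((A ^ m) (Qr' r φ)) : H) r
  Qr'_hasDeriv : ∀ (m : ℕ) (φ : D), ∀ r ∈ Set.Ioi R₀,
    HasDerivAt (fun t : ℝ => (((A ^ m) (Qr' t φ)) : H)) (((A ^ m) (Qr'' r φ)) : H) r
  Qr''_cont : ∀ (m : ℕ) (φ : D),
    ContinuousOn (fun r : ℝ => (((A ^ m) (Qr'' r φ)) : H)) (Set.Ioi R₀)
  V₁_hasDeriv : ∀ (m : ℕ) (φ : D), ∀ r ∈ Set.Ioi R₀,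
    HasDerivAt (fun t : ℝ => (((A ^ m) (V₁ t φ)) : H)) (((A ^ m) (V₁' r φ)) : H) r
  V₁'_cont : ∀ (m : ℕ) (φ : D),
    ContinuousOn (fun r : ℝ => (((A ^ m) (V₁' r φ)) : H)) (Set.Ioi R₀)
  V₂_cont : ∀ (m : ℕ) (φ : D),
    ContinuousOn (fun r : ℝ => (((A ^ m) (V₂ r φ)) : H)) (Set.Ioi R₀)
  -- assumption (A0): graded bounds on `Q⁽ʲ⁾(r)` for `j = 0,1,2`
  A0_graded : ∀ m : ℕ, ∃ Cm : ℝ, ∀ r ∈ Set.Ioi R₀, ∀ φ : D,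
    ‖(((A ^ m) ((Qr r - A ^ 2) φ)) : H)‖ ≤ Cm * r ^ (-τ₀) * ‖(((A ^ (m + 2)) φ) : H)‖ ∧
    ‖(((A ^ m) (Qr' r φ)) : H)‖ ≤ Cm * r ^ (-(τ₀ + 1)) * ‖(((A ^ (m + 2)) φ) : H)‖ ∧
    ‖(((A ^ m) (Qr'' r φ)) : H)‖ ≤ Cm * r ^ (-(τ₀ + 2)) * ‖(((A ^ (m + 2)) φ) : H)‖
  -- assumption (A0): form bounds (case `s = -1/2`)
  A0_form : ∃ C : ℝ, ∀ r ∈ Set.Ioi R₀, ∀ φ ψ : D,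
    ‖(inner ℂ ((((Qr r - A ^ 2) φ) : H)) ((ψ : H)) : ℂ)‖ ≤
      C * r ^ (-τ₀) * ‖(A φ : H)‖ * ‖(A ψ : H)‖ ∧
    ‖(inner ℂ (((Qr' r φ) : H)) ((ψ : H)) : ℂ)‖ ≤
      C * r ^ (-(τ₀ + 1)) * ‖(A φ : H)‖ * ‖(A ψ : H)‖ ∧
    ‖(inner ℂ (((Qr'' r φ) : H)) ((ψ : H)) : ℂ)‖ ≤
      C * r ^ (-(τ₀ + 2)) * ‖(A φ : H)‖ * ‖(A ψ : H)‖
  -- assumption (A1): `H → H` bounds on `V₁⁽ʲ⁾(r)` for `j = 0,1`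
  A1_bound : ∃ C : ℝ, ∀ r ∈ Set.Ioi R₀, ∀ φ : D,
    ‖((V₁ r φ) : H)‖ ≤ C * r ^ (-τ₁) * ‖(φ : H)‖ ∧
    ‖((V₁' r φ) : H)‖ ≤ C * r ^ (-(τ₁ + 1)) * ‖(φ : H)‖
  -- assumption (A1): graded bounds
  A1_graded : ∀ k : ℕ, ∃ Ck : ℝ, ∀ r ∈ Set.Ioi R₀, ∀ φ : D,
    ‖(((A ^ (2 * k)) (V₁ r φ)) : H)‖ ≤ Ck * r ^ (-τ₁) * ‖(((A ^ (2 * k)) φ) : H)‖ ∧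
    ‖(((A ^ (2 * k)) (V₁' r φ)) : H)‖ ≤ Ck * r ^ (-(τ₁ + 1)) * ‖(((A ^ (2 * k)) φ) : H)‖
  -- assumption (A2): `H → H` bound on `V₂(r)`
  A2_bound : ∃ C : ℝ, ∀ r ∈ Set.Ioi R₀, ∀ φ : D,
    ‖((V₂ r φ) : H)‖ ≤ C * r ^ (-τ₂) * ‖(φ : H)‖
  -- assumption (A2): graded bounds
  A2_graded : ∀ k : ℕ, ∃ Ck : ℝ, ∀ r ∈ Set.Ioi R₀, ∀ φ : D,
    ‖(((A ^ (2 * k)) (V₂ r φ)) : H)‖ ≤ Ck * r ^ (-τ₂) * ‖(((A ^ (2 * k)) φ) : H)‖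

/-- `u` is a solution of `Pu = 0` in the sense of Bouclet's paper: `r ↦ A^m u(r)` is `C¹`
with derivative `A^m u'(r)` for all `m`; as an `H`-valued function `u` is `C²` with second
derivative `u''`; `u` and `u''` are in `L²H`; `∫ e^{-4r}‖Q u(r)‖² dr < ∞`; and
`u'' = V₁(r)u' + V₂(r)u + e^{-2r} Q(r) u` on `(R₀,∞)`. -/
structure IsSolution {H : Type*} [NormedAddCommGroup H] [InnerProductSpace ℂ H]
    [CompleteSpace H] {R₀ : ℝ} (S : OpSetting H R₀)
    (u u' : ℝ → S.D) (u'' : ℝ → H) : Prop where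
  u_hasDeriv : ∀ (m : ℕ), ∀ r ∈ Set.Ioi R₀,
    HasDerivAt (fun t : ℝ => (((S.A ^ m) (u t)) : H)) (((S.A ^ m) (u' r)) : H) r
  u'_cont : ∀ m : ℕ, ContinuousOn (fun r : ℝ => (((S.A ^ m) (u' r)) : H)) (Set.Ioi R₀)
  u'_hasDeriv : ∀ r ∈ Set.Ioi R₀, HasDerivAt (fun t : ℝ => ((u' t) : H)) (u'' r) r
  u''_cont : ContinuousOn u'' (Set.Ioi R₀)
  u_L2 : IntegrableOn (fun r : ℝ => ‖((u r) : H)‖ ^ 2) (Set.Ioi R₀)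
  u''_L2 : IntegrableOn (fun r : ℝ => ‖u'' r‖ ^ 2) (Set.Ioi R₀)
  Qu_L2 : IntegrableOn
    (fun r : ℝ => Real.exp (-4 * r) * ‖(((S.A ^ 2) (u r)) : H)‖ ^ 2) (Set.Ioi R₀)
  eqn : ∀ r ∈ Set.Ioi R₀, u'' r =
    ((S.V₁ r (u' r)) : H) + ((S.V₂ r (u r)) : H) + Real.exp (-2 * r) • ((S.Qr r (u r)) : H)

/-- Auxiliary: continuity of `t ↦ T t (v t)` from continuity of `t ↦ T t φ` for fixed `φ`,
a graded operator bound, and continuity of `t ↦ B (v t)`. -/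
private lemma contOn_apply {H : Type*} [NormedAddCommGroup H] [InnerProductSpace ℂ H]
    {R₀ : ℝ} {D : Submodule ℂ H} {T : ℝ → D →ₗ[ℂ] D} {B : D →ₗ[ℂ] D}
    {v : ℝ → D} {g : ℝ → ℝ}
    (hT : ∀ φ : D, ContinuousOn (fun t : ℝ => ((T t φ : H))) (Set.Ioi R₀))
    (hg : ContinuousOn g (Set.Ioi R₀))
    (hbd : ∀ t ∈ Set.Ioi R₀, ∀ φ : D, ‖(T t φ : H)‖ ≤ g t * ‖(B φ : H)‖)
    (hv : ContinuousOn (fun t : ℝ => ((B (v t) : H))) (Set.Ioi R₀)) :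
    ContinuousOn (fun t : ℝ => ((T t (v t) : H))) (Set.Ioi R₀) := by
  intro s hs
  have h0 : Tendsto (fun t : ℝ => ((T t (v t - v s) : H))) (nhdsWithin s (Set.Ioi R₀))
      (nhds 0) := by
    have hlim : Tendsto (fun t : ℝ => g t * ‖((B (v t) : H)) - ((B (v s) : H))‖)
        (nhdsWithin s (Set.Ioi R₀)) (nhds (g s * ‖((B (v s) : H)) - ((B (v s) : H))‖)) :=
      (hg s hs).mul ((hv s hs).sub continuousWithinAt_const).norm
    refine squeeze_zero_norm' ?_ (by simpa using hlim)
    filter_upwards [self_mem_nhdsWithin] with t ht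
    simpa [map_sub] using hbd t ht (v t - v s)
  have h1 : Tendsto (fun t : ℝ => ((T t (v s) : H))) (nhdsWithin s (Set.Ioi R₀))
      (nhds ((T s (v s) : H))) := hT (v s) s hs
  have h2 := h0.add h1
  rw [zero_add] at h2
  refine (Filter.Tendsto.congr (fun t => ?_) h2 : _)
  simp [map_sub]

set_option maxHeartbeats 2000000 in
theorem stmt_13 {H : Type*} [NormedAddCommGroup H] [InnerProductSpace ℂ H] [CompleteSpace H]
    [TopologicalSpace.SeparableSpace H]
    (R₀ : ℝ) (hR₀ : 0 < R₀) (S : OpSetting H R₀)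
    (hτ₀ : 1 < S.τ₀) (hτ₁ : 2 < S.τ₁) (hτ₂ : 2 < S.τ₂)
    (u u' : ℝ → S.D) (u'' : ℝ → H) (hu : IsSolution S u u' u'')
    (hQu : ∀ r : ℝ, R₀ < r →
      IntegrableOn (fun t : ℝ =>
        Real.exp (-2 * t) * ‖(((S.A ^ 2) (u t)) : H)‖) (Set.Ioi r)) :
    ∀ r : ℝ, R₀ < r →
      IntegrableOn (fun t : ℝ => Real.exp (-2 * t) • ((S.Qr t (u t)) : H)) (Set.Ioi r) ∧
      IntegrableOn (fun t : ℝ => ((S.V₁ t (u' t)) : H)) (Set.Ioi r) ∧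
      IntegrableOn (fun t : ℝ => ((S.V₂ t (u t)) : H)) (Set.Ioi r) ∧
      -((u' r : H)) = (∫ t in Set.Ioi r, Real.exp (-2 * t) • ((S.Qr t (u t)) : H))
        + (∫ t in Set.Ioi r, ((S.V₁ t (u' t)) : H))
        + ∫ t in Set.Ioi r, ((S.V₂ t (u t)) : H) := by
  obtain ⟨C₀, hC₀⟩ := S.A0_graded 0
  obtain ⟨C₁, hC₁⟩ := S.A1_bound
  obtain ⟨C₂, hC₂⟩ := S.A2_bound
  -- master pointwise bounds
  have hQbd : ∀ t ∈ Set.Ioi R₀, ∀ φ : S.D,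
      ‖((S.Qr t φ : H))‖ ≤ (|C₀| * t ^ (-S.τ₀) + 1) * ‖((S.A ^ 2) φ : H)‖ := by
    intro t ht φ
    have h := (hC₀ t ht φ).1
    simp only [pow_zero, Module.End.one_apply] at h
    have hx : (0:ℝ) ≤ t ^ (-S.τ₀) := Real.rpow_nonneg (le_of_lt (lt_trans hR₀ ht)) _
    have hy : (0:ℝ) ≤ ‖((S.A ^ 2) φ : H)‖ := norm_nonneg _
    have heq : ((S.Qr t φ : H)) = (((S.Qr t - S.A ^ 2) φ : H)) + (((S.A ^ 2) φ : H)) := by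
      simp [LinearMap.sub_apply]
    rw [heq]
    have h2 : C₀ * t ^ (-S.τ₀) * ‖((S.A ^ (0 + 2)) φ : H)‖ ≤
        |C₀| * t ^ (-S.τ₀) * ‖((S.A ^ 2) φ : H)‖ := by
      norm_num
      exact mul_le_mul_of_nonneg_right (mul_le_mul_of_nonneg_right (le_abs_self C₀) hx) hy
    have h3 := norm_add_le (((S.Qr t - S.A ^ 2) φ : H)) (((S.A ^ 2) φ : H))
    nlinarith [h, h2, h3]
  have hV1bd : ∀ t ∈ Set.Ioi R₀, ∀ φ : S.D,
      ‖((S.V₁ t φ : H))‖ ≤ |C₁| * t ^ (-S.τ₁) * ‖((S.A ^ 0) φ : H)‖ := by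
    intro t ht φ
    have h := (hC₁ t ht φ).1
    have hx : (0:ℝ) ≤ t ^ (-S.τ₁) := Real.rpow_nonneg (le_of_lt (lt_trans hR₀ ht)) _
    simp only [pow_zero, Module.End.one_apply]
    exact h.trans (mul_le_mul_of_nonneg_right
      (mul_le_mul_of_nonneg_right (le_abs_self C₁) hx) (norm_nonneg _))
  have hV2bd : ∀ t ∈ Set.Ioi R₀, ∀ φ : S.D,
      ‖((S.V₂ t φ : H))‖ ≤ |C₂| * t ^ (-S.τ₂) * ‖((S.A ^ 0) φ : H)‖ := by
    intro t ht φ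
    have h := hC₂ t ht φ
    have hx : (0:ℝ) ≤ t ^ (-S.τ₂) := Real.rpow_nonneg (le_of_lt (lt_trans hR₀ ht)) _
    simp only [pow_zero, Module.End.one_apply]
    exact h.trans (mul_le_mul_of_nonneg_right
      (mul_le_mul_of_nonneg_right (le_abs_self C₂) hx) (norm_nonneg _))
  -- basic continuity facts
  have hcontu : ContinuousOn (fun t : ℝ => ((u t : H))) (Set.Ioi R₀) := by
    intro s hs
    have := hu.u_hasDeriv 0 s hs
    simp only [pow_zero, Module.End.one_apply] at this
    exact this.continuousAt.continuousWithinAt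
  have hcontu' : ContinuousOn (fun t : ℝ => ((u' t : H))) (Set.Ioi R₀) := by
    have := hu.u'_cont 0
    simpa only [pow_zero, Module.End.one_apply] using this
  have hcontA0u : ContinuousOn (fun t : ℝ => (((S.A ^ 0) (u t) : H))) (Set.Ioi R₀) := by
    simpa only [pow_zero, Module.End.one_apply] using hcontu
  have hcontA0u' : ContinuousOn (fun t : ℝ => (((S.A ^ 0) (u' t) : H))) (Set.Ioi R₀) :=
    hu.u'_cont 0
  have hcontA2u : ContinuousOn (fun t : ℝ => (((S.A ^ 2) (u t) : H))) (Set.Ioi R₀) :=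
    fun s hs => (hu.u_hasDeriv 2 s hs).continuousAt.continuousWithinAt
  have hrpow_cont : ∀ p : ℝ, ContinuousOn (fun t : ℝ => t ^ p) (Set.Ioi R₀) := by
    intro p
    exact fun s hs => (Real.continuousAt_rpow_const s p
      (Or.inl (ne_of_gt (lt_trans hR₀ hs)))).continuousWithinAt
  -- continuity of the three integrands
  have hcontQ : ContinuousOn (fun t : ℝ => ((S.Qr t (u t) : H))) (Set.Ioi R₀) := by
    refine contOn_apply (B := S.A ^ 2) (g := fun t : ℝ => |C₀| * t ^ (-S.τ₀) + 1)
      ?_ ?_ hQbd hcontA2u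
    · intro φ s hs
      have := S.Qr_hasDeriv 0 φ s hs
      simp only [pow_zero, Module.End.one_apply] at this
      exact this.continuousAt.continuousWithinAt
    · exact (continuousOn_const.mul (hrpow_cont _)).add continuousOn_const
  have hcontV1 : ContinuousOn (fun t : ℝ => ((S.V₁ t (u' t) : H))) (Set.Ioi R₀) := by
    refine contOn_apply (B := S.A ^ 0) (g := fun t : ℝ => |C₁| * t ^ (-S.τ₁))
      ?_ (continuousOn_const.mul (hrpow_cont _)) hV1bd hcontA0u'
    intro φ s hs
    have := S.V₁_hasDeriv 0 φ s hs
    simp only [pow_zero, Module.End.one_apply] at this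
    exact this.continuousAt.continuousWithinAt
  have hcontV2 : ContinuousOn (fun t : ℝ => ((S.V₂ t (u t) : H))) (Set.Ioi R₀) := by
    refine contOn_apply (B := S.A ^ 0) (g := fun t : ℝ => |C₂| * t ^ (-S.τ₂))
      ?_ (continuousOn_const.mul (hrpow_cont _)) hV2bd hcontA0u
    intro φ
    have := S.V₂_cont 0 φ
    simpa only [pow_zero, Module.End.one_apply] using this
  -- the quantity M
  set M : ℝ := ∫ t in Set.Ioi R₀, ‖u'' t‖ ^ 2 with hMdef
  have hMnonneg : 0 ≤ M := setIntegral_nonneg measurableSet_Ioi (fun x _ => by positivity)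
  intro r hr
  have hr0 : (0:ℝ) < r := lt_trans hR₀ hr
  have hIoisub : Set.Ioi r ⊆ Set.Ioi R₀ := fun x hx => lt_trans hr hx
  -- FTC for u' over [a, b] ⊆ [r, ∞)
  have hftc : ∀ t : ℝ, r ≤ t → (∫ s in r..t, u'' s) = ((u' t : H)) - ((u' r : H)) := by
    intro t hrt
    have hsub : Set.uIcc r t ⊆ Set.Ioi R₀ := by
      rw [Set.uIcc_of_le hrt]; exact fun x hx => lt_of_lt_of_le hr hx.1
    exact intervalIntegral.integral_eq_sub_of_hasDerivAt
      (fun x hx => hu.u'_hasDeriv x (hsub hx))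
      ((hu.u''_cont.mono hsub).intervalIntegrable)
  -- integral bound on ‖u''‖
  have e1 : ∀ t : ℝ, r ≤ t → (∫ s in r..t, ‖u'' s‖) ≤ (t - r) / 2 + M / 2 := by
    intro t hrt
    have hsub : Set.uIcc r t ⊆ Set.Ioi R₀ := by
      rw [Set.uIcc_of_le hrt]; exact fun x hx => lt_of_lt_of_le hr hx.1
    have hc : ContinuousOn (fun s : ℝ => ‖u'' s‖) (Set.uIcc r t) := (hu.u''_cont.mono hsub).norm
    have hc2 : ContinuousOn (fun s : ℝ => ‖u'' s‖ ^ 2) (Set.uIcc r t) := hc.pow 2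
    have i1 : IntervalIntegrable (fun s : ℝ => ‖u'' s‖) volume r t := hc.intervalIntegrable
    have i2 : IntervalIntegrable (fun s : ℝ => (1 + ‖u'' s‖ ^ 2) / 2) volume r t :=
      ((continuousOn_const.add hc2).div_const 2).intervalIntegrable
    have hmono := intervalIntegral.integral_mono_on hrt i1 i2
      (fun x _ => by nlinarith [sq_nonneg (‖u'' x‖ - 1)])
    have heq : (∫ s in r..t, (1 + ‖u'' s‖ ^ 2) / 2)
        = ((t - r) + ∫ s in r..t, ‖u'' s‖ ^ 2) / 2 := by
      rw [intervalIntegral.integral_div, intervalIntegral.integral_add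
        intervalIntegrable_const hc2.intervalIntegrable, intervalIntegral.integral_const]
      simp
    have hM : (∫ s in r..t, ‖u'' s‖ ^ 2) ≤ M := by
      rw [intervalIntegral.integral_of_le hrt]
      refine setIntegral_mono_set hu.u''_L2 (ae_of_all _ fun x => by positivity) ?_
      exact HasSubset.Subset.eventuallyLE (fun x hx => lt_trans hr hx.1)
    rw [heq] at hmono
    linarith
  -- linear growth bound on u'
  set K : ℝ := ‖((u' r : H))‖ + M / 2 with hKdef
  have hKnonneg : 0 ≤ K := by positivity
  have hU' : ∀ t ∈ Set.Ioi r, ‖((u' t : H))‖ ≤ K + t / 2 := by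
    intro t ht
    have hrt : r ≤ t := le_of_lt ht
    have h1 : ‖((u' t : H)) - ((u' r : H))‖ ≤ (t - r) / 2 + M / 2 := by
      rw [← hftc t hrt]
      exact (intervalIntegral.norm_integral_le_integral_norm hrt).trans (e1 t hrt)
    have h2 := norm_sub_norm_le ((u' t : H)) ((u' r : H))
    simp only [hKdef]
    linarith
  -- integrability of the Q-term
  have hF1 : IntegrableOn (fun t : ℝ => Real.exp (-2 * t) • ((S.Qr t (u t)) : H))
      (Set.Ioi r) := by
    have hmeas : AEStronglyMeasurable
        (fun t : ℝ => Real.exp (-2 * t) • ((S.Qr t (u t)) : H))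
        (volume.restrict (Set.Ioi r)) :=
      (((Real.continuous_exp.comp (continuous_const.mul continuous_id)).continuousOn).smul
        (hcontQ.mono hIoisub)).aestronglyMeasurable measurableSet_Ioi
    refine Integrable.mono' ((hQu r hr).const_mul (|C₀| * R₀ ^ (-S.τ₀) + 1)) hmeas ?_
    filter_upwards [ae_restrict_mem measurableSet_Ioi] with t ht
    have htR : t ∈ Set.Ioi R₀ := hIoisub ht
    have h1 : t ^ (-S.τ₀) ≤ R₀ ^ (-S.τ₀) :=
      Real.rpow_le_rpow_of_nonpos hR₀ (le_of_lt htR)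
        (by linarith [S.τ₀_pos])
    have h2 := hQbd t htR (u t)
    have hexp := Real.exp_pos (-2 * t)
    calc ‖Real.exp (-2 * t) • ((S.Qr t (u t)) : H)‖
        = Real.exp (-2 * t) * ‖((S.Qr t (u t)) : H)‖ := by
          rw [norm_smul, Real.norm_eq_abs, abs_of_pos hexp]
      _ ≤ Real.exp (-2 * t) * ((|C₀| * t ^ (-S.τ₀) + 1) * ‖((S.A ^ 2) (u t) : H)‖) :=
          mul_le_mul_of_nonneg_left h2 hexp.le
      _ = (|C₀| * t ^ (-S.τ₀) + 1) * (Real.exp (-2 * t) * ‖((S.A ^ 2) (u t) : H)‖) := by ring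
      _ ≤ (|C₀| * R₀ ^ (-S.τ₀) + 1) * (Real.exp (-2 * t) * ‖((S.A ^ 2) (u t) : H)‖) := by
          have : |C₀| * t ^ (-S.τ₀) + 1 ≤ |C₀| * R₀ ^ (-S.τ₀) + 1 := by
            have := mul_le_mul_of_nonneg_left h1 (abs_nonneg C₀); linarith
          exact mul_le_mul_of_nonneg_right this (by positivity)
  -- integrability of the V₁-term
  have hF2 : IntegrableOn (fun t : ℝ => ((S.V₁ t (u' t)) : H)) (Set.Ioi r) := by
    have hmeas : AEStronglyMeasurable (fun t : ℝ => ((S.V₁ t (u' t)) : H))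
        (volume.restrict (Set.Ioi r)) :=
      (hcontV1.mono hIoisub).aestronglyMeasurable measurableSet_Ioi
    have hig : IntegrableOn
        (fun t : ℝ => |C₁| * K * t ^ (-S.τ₁) + |C₁| / 2 * t ^ (1 - S.τ₁)) (Set.Ioi r) :=
      ((integrableOn_Ioi_rpow_of_lt (by linarith) hr0).const_mul (|C₁| * K)).add
        ((integrableOn_Ioi_rpow_of_lt (by linarith) hr0).const_mul (|C₁| / 2))
    refine Integrable.mono' hig hmeas ?_
    filter_upwards [ae_restrict_mem measurableSet_Ioi] with t ht
    have htR : t ∈ Set.Ioi R₀ := hIoisub ht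
    have ht0 : (0:ℝ) < t := lt_trans hr0 ht
    have h1 := hV1bd t htR (u' t)
    simp only [pow_zero, Module.End.one_apply] at h1
    have h2 := hU' t ht
    have hx : (0:ℝ) ≤ t ^ (-S.τ₁) := Real.rpow_nonneg ht0.le _
    have hrw : t ^ (1 - S.τ₁) = t * t ^ (-S.τ₁) := by
      rw [show (1 : ℝ) - S.τ₁ = 1 + -S.τ₁ by ring, Real.rpow_add ht0, Real.rpow_one]
    have h3 : ‖((S.V₁ t (u' t)) : H)‖ ≤ |C₁| * t ^ (-S.τ₁) * (K + t / 2) := by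
      refine h1.trans ?_
      exact mul_le_mul_of_nonneg_left h2 (by positivity)
    refine h3.trans (le_of_eq ?_)
    rw [hrw]; ring
  -- integrability of the V₂-term
  have hF3 : IntegrableOn (fun t : ℝ => ((S.V₂ t (u t)) : H)) (Set.Ioi r) := by
    have hmeas : AEStronglyMeasurable (fun t : ℝ => ((S.V₂ t (u t)) : H))
        (volume.restrict (Set.Ioi r)) :=
      (hcontV2.mono hIoisub).aestronglyMeasurable measurableSet_Ioi
    have hig : IntegrableOn
        (fun t : ℝ => |C₂| * t ^ (-S.τ₂) + (|C₂| * R₀ ^ (-S.τ₂)) * ‖((u t : H))‖ ^ 2)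
        (Set.Ioi r) :=
      ((integrableOn_Ioi_rpow_of_lt (by linarith) hr0).const_mul (|C₂|)).add
        ((hu.u_L2.mono_set hIoisub).const_mul _)
    refine Integrable.mono' hig hmeas ?_
    filter_upwards [ae_restrict_mem measurableSet_Ioi] with t ht
    have htR : t ∈ Set.Ioi R₀ := hIoisub ht
    have ht0 : (0:ℝ) < t := lt_trans hr0 ht
    have h1 := hV2bd t htR (u t)
    simp only [pow_zero, Module.End.one_apply] at h1
    have hx : (0:ℝ) ≤ t ^ (-S.τ₂) := Real.rpow_nonneg ht0.le _
    have hxx : t ^ (-S.τ₂) ≤ R₀ ^ (-S.τ₂) :=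
      Real.rpow_le_rpow_of_nonpos hR₀ (le_of_lt htR) (by linarith [S.τ₂_pos])
    have h2 : ‖((u t : H))‖ ≤ 1 + ‖((u t : H))‖ ^ 2 := by nlinarith [sq_nonneg (‖((u t : H))‖ - 1)]
    calc ‖((S.V₂ t (u t)) : H)‖ ≤ |C₂| * t ^ (-S.τ₂) * ‖((u t : H))‖ := h1
      _ ≤ |C₂| * t ^ (-S.τ₂) * (1 + ‖((u t : H))‖ ^ 2) :=
          mul_le_mul_of_nonneg_left h2 (by positivity)
      _ = |C₂| * t ^ (-S.τ₂) + |C₂| * t ^ (-S.τ₂) * ‖((u t : H))‖ ^ 2 := by ring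
      _ ≤ |C₂| * t ^ (-S.τ₂) + (|C₂| * R₀ ^ (-S.τ₂)) * ‖((u t : H))‖ ^ 2 := by
          have : |C₂| * t ^ (-S.τ₂) ≤ |C₂| * R₀ ^ (-S.τ₂) :=
            mul_le_mul_of_nonneg_left hxx (abs_nonneg _)
          nlinarith [sq_nonneg ‖((u t : H))‖]
  -- integrability of u''
  have hIu'' : IntegrableOn u'' (Set.Ioi r) := by
    refine IntegrableOn.congr_fun ((hF2.add hF3).add hF1) ?_ measurableSet_Ioi
    intro t ht
    exact (hu.eqn t (hIoisub ht)).symm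
  -- the limit of u' at infinity
  set L : H := ((u' r : H)) + ∫ t in Set.Ioi r, u'' t with hLdef
  have hlim : Tendsto (fun T : ℝ => ((u' T : H))) atTop (nhds L) := by
    have h1 : Tendsto (fun T : ℝ => ∫ s in r..T, u'' s) atTop
        (nhds (∫ t in Set.Ioi r, u'' t)) :=
      intervalIntegral_tendsto_integral_Ioi r hIu'' tendsto_id
    have h3 : Tendsto (fun T : ℝ => ((u' r : H)) + ∫ s in r..T, u'' s) atTop (nhds L) :=
      tendsto_const_nhds.add h1
    refine h3.congr' ?_
    filter_upwards [eventually_ge_atTop r] with T hT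
    rw [hftc T hT]
    abel
  -- L must vanish
  have hL0 : L = 0 := by
    by_contra hL
    have hLpos : 0 < ‖L‖ := norm_pos_iff.mpr hL
    obtain ⟨T₀, hT₀⟩ := Metric.tendsto_atTop.mp hlim (‖L‖ / 2) (by positivity)
    set T₁ : ℝ := max T₀ (r + 1) with hT₁def
    have hrT₁' : r + 1 ≤ T₁ := le_max_right _ _
    have hrT₁ : r ≤ T₁ := by linarith
    have hRT₁ : R₀ < T₁ := by linarith
    set φ : H → ℝ := fun x => RCLike.re (inner ℂ L x : ℂ) with hφdef
    have hφcont : Continuous φ := RCLike.continuous_re.comp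
      (Continuous.inner continuous_const continuous_id)
    have hu0 : ∀ x ∈ Set.Ioi R₀, HasDerivAt (fun t : ℝ => ((u t : H))) ((u' x : H)) x := by
      intro x hx
      have := hu.u_hasDeriv 0 x hx
      simpa only [pow_zero, Module.End.one_apply] using this
    set b : ℝ := ‖L‖ ^ 2 / 2 with hbdef
    have hb : 0 < b := by positivity
    have key : ∀ T : ℝ, T₁ ≤ T →
        φ ((u T₁ : H)) + (T - T₁) * b ≤ ‖L‖ * ‖((u T : H))‖ := by
      intro T hT
      have hsub : Set.uIcc T₁ T ⊆ Set.Ioi R₀ := by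
        rw [Set.uIcc_of_le hT]
        exact fun x hx => lt_of_lt_of_le hRT₁ hx.1
      have hii : IntervalIntegrable (fun s : ℝ => ((u' s : H))) volume T₁ T :=
        (hcontu'.mono hsub).intervalIntegrable
      have hftcu : (∫ s in T₁..T, ((u' s : H))) = ((u T : H)) - ((u T₁ : H)) :=
        intervalIntegral.integral_eq_sub_of_hasDerivAt (fun x hx => hu0 x (hsub hx)) hii
      have hioc : IntegrableOn (fun s : ℝ => ((u' s : H))) (Set.Ioc T₁ T) := hii.1
      have hinner : Integrable (fun s : ℝ => (inner ℂ L ((u' s : H)) : ℂ))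
          (volume.restrict (Set.Ioc T₁ T)) := hioc.const_inner L
      have h1 : (∫ s in Set.Ioc T₁ T, φ ((u' s : H))) = φ ((u T : H)) - φ ((u T₁ : H)) := by
        calc (∫ s in Set.Ioc T₁ T, φ ((u' s : H)))
            = RCLike.re (∫ s in Set.Ioc T₁ T, (inner ℂ L ((u' s : H)) : ℂ)) :=
              integral_re hinner
          _ = RCLike.re (inner ℂ L (∫ s in Set.Ioc T₁ T, ((u' s : H))) : ℂ) := by
              rw [integral_inner hioc]
          _ = RCLike.re (inner ℂ L (((u T : H)) - ((u T₁ : H))) : ℂ) := by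
              rw [← intervalIntegral.integral_of_le hT, hftcu]
          _ = φ ((u T : H)) - φ ((u T₁ : H)) := by
              rw [inner_sub_right, map_sub]
      have h2 : (T - T₁) * b ≤ ∫ s in Set.Ioc T₁ T, φ ((u' s : H)) := by
        have hptw : ∀ x ∈ Set.Icc T₁ T, b ≤ φ ((u' x : H)) := by
          intro x hx
          have hxT₀ : T₀ ≤ x := le_trans (le_max_left _ _) hx.1
          have hdist := hT₀ x hxT₀
          rw [dist_eq_norm] at hdist
          have e : (inner ℂ L ((u' x : H)) : ℂ)
              = (inner ℂ L L : ℂ) + (inner ℂ L (((u' x : H)) - L) : ℂ) := by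
            rw [← inner_add_right, add_sub_cancel]
          have e2 : φ ((u' x : H))
              = ‖L‖ ^ 2 + RCLike.re (inner ℂ L (((u' x : H)) - L) : ℂ) := by
            rw [hφdef]
            simp only
            rw [e, map_add, inner_self_eq_norm_sq]
          have e3 : |RCLike.re (inner ℂ L (((u' x : H)) - L) : ℂ)| ≤ ‖L‖ * (‖L‖ / 2) := by
            refine le_trans (RCLike.abs_re_le_norm _) ?_
            exact le_trans (norm_inner_le_norm _ _)
              (mul_le_mul_of_nonneg_left hdist.le (norm_nonneg L))
          have e4 := neg_abs_le (RCLike.re (inner ℂ L (((u' x : H)) - L) : ℂ))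
          rw [e2, hbdef]
          nlinarith
        have hcf : IntervalIntegrable (fun s : ℝ => φ ((u' s : H))) volume T₁ T :=
          (hφcont.comp_continuousOn (hcontu'.mono hsub)).intervalIntegrable
        have hmono := intervalIntegral.integral_mono_on hT intervalIntegrable_const hcf hptw
        rw [intervalIntegral.integral_const, intervalIntegral.integral_of_le hT] at hmono
        simpa [smul_eq_mul] using hmono
      have h3 : φ ((u T : H)) ≤ ‖L‖ * ‖((u T : H))‖ := by
        rw [hφdef]
        simp only
        calc RCLike.re (inner ℂ L ((u T : H)) : ℂ)
            ≤ |RCLike.re (inner ℂ L ((u T : H)) : ℂ)| := le_abs_self _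
          _ ≤ ‖(inner ℂ L ((u T : H)) : ℂ)‖ := RCLike.abs_re_le_norm _
          _ ≤ ‖L‖ * ‖((u T : H))‖ := norm_inner_le_norm _ _
      linarith
    set a : ℝ := φ ((u T₁ : H)) - T₁ * b with hadef

    set T₃ : ℝ := max T₁ (2 * |a| / b) with hT₃def
    have hT₁T₃ : T₁ ≤ T₃ := le_max_left _ _
    have hT₃pos : 0 < T₃ := lt_of_lt_of_le (by linarith) hT₁T₃
    have hgrow : ∀ T ∈ Set.Ioi T₃, (‖L‖ / 4) ^ 2 * T ^ 2 ≤ ‖((u T : H))‖ ^ 2 := by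
      intro T hT
      have hTT₁ : T₁ ≤ T := le_trans hT₁T₃ (le_of_lt hT)
      have hk := key T hTT₁
      have hexp : (T - T₁) * b = T * b - T₁ * b := by ring
      have h4 : a + T * b ≤ ‖L‖ * ‖((u T : H))‖ := by
        rw [hadef]; linarith
      have hTb : 2 * |a| ≤ T * b := by
        have hTle : 2 * |a| / b ≤ T := le_trans (le_max_right _ _) hT.le
        calc 2 * |a| = (2 * |a| / b) * b := by field_simp
          _ ≤ T * b := mul_le_mul_of_nonneg_right hTle hb.le
      have h5 : T * b / 2 ≤ ‖L‖ * ‖((u T : H))‖ := by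
        have := neg_abs_le a
        linarith
      have hT0 : 0 < T := lt_trans hT₃pos hT
      have h6 : T * ‖L‖ / 4 ≤ ‖((u T : H))‖ := by
        rw [hbdef] at h5
        nlinarith [norm_nonneg ((u T : H)), hLpos]
      nlinarith [mul_nonneg (sub_nonneg.mpr h6)
        (by positivity : (0:ℝ) ≤ ‖((u T : H))‖ + T * ‖L‖ / 4)]
    have hsub3 : Set.Ioi T₃ ⊆ Set.Ioi R₀ := by
      intro x hx
      have : T₃ < x := hx
      have : T₁ ≤ T₃ := hT₁T₃
      exact lt_trans (by linarith : R₀ < T₃) hx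
    have hint1 : IntegrableOn (fun T : ℝ => (‖L‖ / 4) ^ 2 * T ^ 2) (Set.Ioi T₃) := by
      refine Integrable.mono' (hu.u_L2.mono_set hsub3)
        ((continuous_const.mul (continuous_pow 2)).aestronglyMeasurable) ?_
      filter_upwards [ae_restrict_mem measurableSet_Ioi] with T hT
      have hT0 : 0 < T := lt_trans hT₃pos hT
      rw [Real.norm_eq_abs, abs_of_nonneg (by positivity)]
      exact hgrow T hT
    have hcne : ((‖L‖ / 4) ^ 2 : ℝ) ≠ 0 := by positivity
    have hint2 : IntegrableOn (fun T : ℝ => T ^ 2) (Set.Ioi T₃) := by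
      have h' := hint1.const_mul (((‖L‖ / 4) ^ 2)⁻¹)
      simp only [← mul_assoc, inv_mul_cancel₀ hcne, one_mul] at h'
      exact h'
    have hint3 : IntegrableOn (fun T : ℝ => T ^ (2:ℝ)) (Set.Ioi T₃) := by
      refine hint2.congr_fun ?_ measurableSet_Ioi
      intro x _
      exact (Real.rpow_two x).symm
    rw [integrableOn_Ioi_rpow_iff hT₃pos] at hint3
    norm_num at hint3
  -- conclusion
  have hfinal : -((u' r : H)) = ∫ t in Set.Ioi r, u'' t := by
    have h := hLdef.symm.trans hL0
    exact (neg_eq_of_add_eq_zero_right h)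
  refine ⟨hF1, hF2, hF3, ?_⟩
  have hsum : (∫ t in Set.Ioi r, u'' t)
      = (∫ t in Set.Ioi r, ((S.V₁ t (u' t)) : H))
        + (∫ t in Set.Ioi r, ((S.V₂ t (u t)) : H))
        + ∫ t in Set.Ioi r, Real.exp (-2 * t) • ((S.Qr t (u t)) : H) := by
    rw [setIntegral_congr_fun measurableSet_Ioi (fun t ht => hu.eqn t (hIoisub ht))]
    have h23 : IntegrableOn
        (fun t : ℝ => ((S.V₁ t (u' t)) : H) + ((S.V₂ t (u t)) : H)) (Set.Ioi r) :=
      hF2.add hF3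
    rw [integral_add h23 hF1, integral_add hF2 hF3]
  rw [hfinal, hsum]
  abel
end
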